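/- For every m ∈ ℕ and every dimension d, the index set 𝕀_m := { (s,p) : Ω_m(s,p) ≠ ∅ } satisfies #𝕀_m ≤ exp( m · 2^m · log(2^{m+3} d) ). -/

import Mathlib

open MeasureTheory Finset
open scoped Classical

noncomputable section

/-- The `k`-dispersion of a finite point set `P ⊆ [0,1]^d`: the supremum of the volumes of
axis-parallel boxes inside `[0,1]^d` containing at most `k` points of `P`. -/
def kdisp (d k : ℕ) (P : Finset (Fin d → ℝ)) : ℝ :=
  sSup { v : ℝ | ∃ a b : Fin d → ℝ,
    (∀ i, 0 ≤ a i ∧ a i ≤ b i ∧ b i ≤ 1) ∧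
    (P.filter (fun x => ∀ i, x i ∈ Set.Ioo (a i) (b i))).card ≤ k ∧
    v = ∏ i, (b i - a i) }

/-- The minimal `k`-dispersion over all `n`-point subsets of `[0,1]^d`. -/
def kdispStar (d k n : ℕ) : ℝ :=
  sInf { v : ℝ | ∃ P : Finset (Fin d → ℝ),
    (∀ x ∈ P, ∀ i, x i ∈ Set.Icc (0:ℝ) 1) ∧ P.card = n ∧ v = kdisp d k P }

/-- `I` is a subinterval of `[0,1]`. -/
def IsIntervalIn01 (I : Set ℝ) : Prop := I ⊆ Set.Icc 0 1 ∧ I.OrdConnected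

/-- Membership of the axis-parallel box `∏_ℓ I ℓ` in the family `Ω_m(s,p)`: the box has
volume exceeding `2^{-m}`, and for every coordinate `ℓ` one has
`s ℓ / 2^m < vol(I ℓ) ≤ (s ℓ + 1)/2^m` and `inf (I ℓ) ∈ [p ℓ - 2^{-m}, p ℓ)`. -/
def memOmega (m : ℕ) {d : ℕ} (s : Fin d → ℕ) (p : Fin d → ℝ) (I : Fin d → Set ℝ) : Prop :=
  (∀ ℓ, IsIntervalIn01 (I ℓ)) ∧
  ((2:ℝ) ^ m)⁻¹ < (volume (Set.pi Set.univ I)).toReal ∧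
  ∀ ℓ, (s ℓ : ℝ) / 2 ^ m < (volume (I ℓ)).toReal ∧
    (volume (I ℓ)).toReal ≤ ((s ℓ : ℝ) + 1) / 2 ^ m ∧
    sInf (I ℓ) ∈ Set.Ico (p ℓ - ((2:ℝ) ^ m)⁻¹) (p ℓ)

/-- `(s,p)` is an admissible index pair, i.e. `(s,p) ∈ 𝕀_m`: the parameters lie in the
allowed ranges and `Ω_m(s,p) ≠ ∅`. -/
def memIm (m : ℕ) {d : ℕ} (s : Fin d → ℕ) (p : Fin d → ℝ) : Prop :=
  (∀ ℓ, s ℓ < 2 ^ m) ∧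
  (∀ ℓ, ∃ j : ℕ, 1 ≤ j ∧ j ≤ 2 ^ m - 1 ∧ p ℓ = (j : ℝ) / 2 ^ m) ∧
  ∃ I, memOmega m s p I

/-- Membership of `z` in the box `𝔹_m(s,p) = ∏_ℓ [p ℓ, p ℓ + (s ℓ - 1)/2^m]`. -/
def memBox (m : ℕ) {d : ℕ} (s : Fin d → ℕ) (p : Fin d → ℝ) (z : Fin d → ℝ) : Prop :=
  ∀ ℓ, z ℓ ∈ Set.Icc (p ℓ) (p ℓ + ((s ℓ : ℝ) - 1) / 2 ^ m)


/-- `(n+1)^n ≤ e^n · n!` -/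
lemma succ_pow_le_exp_mul_factorial : ∀ n : ℕ, ((n : ℝ) + 1) ^ n ≤ Real.exp n * n.factorial
  | 0 => by simp
  | (n + 1) => by
    have ih := succ_pow_le_exp_mul_factorial n
    have hp : (0 : ℝ) < (n : ℝ) + 1 := by positivity
    have h1 : ((n : ℝ) + 1 + 1) ≤ ((n : ℝ) + 1) * Real.exp (1 / ((n : ℝ) + 1)) := by
      have h := Real.add_one_le_exp (1 / ((n : ℝ) + 1))
      have he : ((n : ℝ) + 1 + 1) = ((n : ℝ) + 1) * (1 / ((n : ℝ) + 1) + 1) := by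
        field_simp; ring
      rw [he]
      nlinarith
    have h2 : ((n : ℝ) + 1 + 1) ^ (n + 1)
        ≤ (((n : ℝ) + 1) * Real.exp (1 / ((n : ℝ) + 1))) ^ (n + 1) :=
      pow_le_pow_left₀ (by positivity) h1 _
    have h3 : (((n : ℝ) + 1) * Real.exp (1 / ((n : ℝ) + 1))) ^ (n + 1)
        = ((n : ℝ) + 1) ^ (n + 1) * Real.exp 1 := by
      rw [mul_pow, ← Real.exp_nat_mul]
      congr 2
      field_simp
      norm_num
    have h5 : ((n : ℝ) + 1) * (((n : ℝ) + 1) ^ n * Real.exp 1)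
        ≤ ((n : ℝ) + 1) * ((Real.exp n * n.factorial) * Real.exp 1) := by
      have he : (0 : ℝ) < Real.exp 1 := Real.exp_pos 1
      apply mul_le_mul_of_nonneg_left _ (le_of_lt hp)
      exact mul_le_mul_of_nonneg_right ih he.le
    have h6 : ((n : ℝ) + 1) * ((Real.exp n * n.factorial) * Real.exp 1)
        = Real.exp ((n : ℝ) + 1) * (((n : ℝ) + 1) * n.factorial) := by
      rw [Real.exp_add]; ring
    have h7 : ((n : ℝ) + 1) ^ (n + 1) * Real.exp 1
        = ((n : ℝ) + 1) * (((n : ℝ) + 1) ^ n * Real.exp 1) := by ring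
    push_cast [Nat.factorial_succ]
    calc ((n : ℝ) + 1 + 1) ^ (n + 1)
        ≤ (((n : ℝ) + 1) * Real.exp (1 / ((n : ℝ) + 1))) ^ (n + 1) := h2
      _ = ((n : ℝ) + 1) ^ (n + 1) * Real.exp 1 := h3
      _ = ((n : ℝ) + 1) * (((n : ℝ) + 1) ^ n * Real.exp 1) := h7
      _ ≤ ((n : ℝ) + 1) * ((Real.exp n * n.factorial) * Real.exp 1) := h5
      _ = Real.exp ((n : ℝ) + 1) * (((n : ℝ) + 1) * n.factorial) := h6

lemma pow_self_le_exp_mul_factorial (n : ℕ) : (n : ℝ) ^ n ≤ Real.exp n * n.factorial :=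
  le_trans (pow_le_pow_left₀ (by positivity) (by linarith : (n : ℝ) ≤ (n : ℝ) + 1) n)
    (succ_pow_le_exp_mul_factorial n)


lemma card_bound {d M B : ℕ} (S : Set ((Fin d → ℕ) × (Fin d → ℕ)))
    (h : ∀ sj ∈ S, (∀ ℓ : Fin d, sj.1 ℓ < 2 ^ M ∧ 1 ≤ sj.2 ℓ ∧ sj.2 ℓ ≤ 2 ^ M - sj.1 ℓ) ∧
      (∑ ℓ, (2 ^ M - 1 - sj.1 ℓ)) ≤ B) :
    S.ncard ≤ (2 * d + B).choose B := by
  classical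
  set F : ((Fin d → ℕ) × (Fin d → ℕ)) → Multiset (Option (Fin d × Bool)) := fun sj =>
    (∑ ℓ : Fin d, (Multiset.replicate (2 ^ M - 1 - sj.1 ℓ - (sj.2 ℓ - 1)) (some (ℓ, true))
      + Multiset.replicate (sj.2 ℓ - 1) (some (ℓ, false))))
    + Multiset.replicate (B - ∑ ℓ, (2 ^ M - 1 - sj.1 ℓ)) none with hF
  have hcount_t : ∀ sj (ℓ₀ : Fin d), Multiset.count (some (ℓ₀, true)) (F sj)
      = 2 ^ M - 1 - sj.1 ℓ₀ - (sj.2 ℓ₀ - 1) := by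
    intro sj ℓ₀
    rw [hF]
    simp only [Multiset.count_add, Multiset.count_sum', Multiset.count_replicate,
      Option.some.injEq, Prod.mk.injEq]
    simp
  have hcount_f : ∀ sj (ℓ₀ : Fin d), Multiset.count (some (ℓ₀, false)) (F sj)
      = sj.2 ℓ₀ - 1 := by
    intro sj ℓ₀
    rw [hF]
    simp only [Multiset.count_add, Multiset.count_sum', Multiset.count_replicate,
      Option.some.injEq, Prod.mk.injEq]
    simp
  have hcard : ∀ sj ∈ S, Multiset.card (F sj) = B := by
    intro sj hsj
    obtain ⟨h1, h2⟩ := h sj hsj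
    rw [hF]
    simp only [Multiset.card_add, Multiset.card_replicate]
    rw [Multiset.card_sum]
    simp only [Multiset.card_add, Multiset.card_replicate]
    have he : ∀ ℓ : Fin d, (2 ^ M - 1 - sj.1 ℓ - (sj.2 ℓ - 1)) + (sj.2 ℓ - 1)
        = 2 ^ M - 1 - sj.1 ℓ := by
      intro ℓ
      obtain ⟨a1, a2, a3⟩ := h1 ℓ
      omega
    rw [Finset.sum_congr rfl (fun ℓ _ => he ℓ)]
    omega
  have key : ∀ x ∈ S, ∀ y ∈ S, F x = F y → x = y := by
    intro x hx y hy hxy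
    obtain ⟨hx1, _⟩ := h x hx
    obtain ⟨hy1, _⟩ := h y hy
    have ext1 : ∀ ℓ : Fin d, x.1 ℓ = y.1 ℓ ∧ x.2 ℓ = y.2 ℓ := by
      intro ℓ
      have ht := hcount_t y ℓ ▸ (hcount_t x ℓ ▸ congrArg (Multiset.count (some (ℓ, true))) hxy)
      have hf := hcount_f y ℓ ▸ (hcount_f x ℓ ▸ congrArg (Multiset.count (some (ℓ, false))) hxy)
      obtain ⟨a1, a2, a3⟩ := hx1 ℓ
      obtain ⟨b1, b2, b3⟩ := hy1 ℓ
      omega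
    exact Prod.ext (funext fun ℓ => (ext1 ℓ).1) (funext fun ℓ => (ext1 ℓ).2)
  rw [← Nat.card_coe_set_eq]
  let G : S → Sym (Option (Fin d × Bool)) B := fun x => ⟨F x.1, hcard x.1 x.2⟩
  have hinj : Function.Injective G := by
    rintro ⟨x, hx⟩ ⟨y, hy⟩ hxy
    have hv : F x = F y := congrArg Subtype.val hxy
    exact Subtype.ext (key x hx y hy hv)
  have hle := Nat.card_le_card_of_injective G hinj
  have hco : Fintype.card (Option (Fin d × Bool)) + B - 1 = 2 * d + B := by
    simp only [Fintype.card_option, Fintype.card_prod, Fintype.card_fin, Fintype.card_bool]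
    omega
  have hsym : Nat.card (Sym (Option (Fin d × Bool)) B) = (2 * d + B).choose B := by
    rw [Nat.card_eq_fintype_card, Sym.card_sym_eq_choose, hco]
  rwa [hsym] at hle

lemma derive {m d : ℕ} (hm : 1 ≤ m) (s j : Fin d → ℕ)
    (hs : ∀ ℓ, s ℓ < 2 ^ m) (hj : ∀ ℓ, 1 ≤ j ℓ)
    (hI : ∃ I, memOmega m s (fun ℓ => (j ℓ : ℝ) / 2 ^ m) I) :
    (∀ ℓ, j ℓ ≤ 2 ^ m - s ℓ) ∧ (∑ ℓ, (2 ^ m - 1 - s ℓ)) ≤ m * 2 ^ m - 1 := by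
  obtain ⟨I, hint, hvol, hco⟩ := hI
  have hpm : (0:ℝ) < 2 ^ m := by positivity
  set x : Fin d → ℝ := fun ℓ => (volume (I ℓ)).toReal with hx
  -- cast of a ℓ := 2^m - 1 - s ℓ
  have hae : ∀ ℓ, ((2 ^ m - 1 - s ℓ : ℕ) : ℝ) = 2 ^ m - 1 - (s ℓ : ℝ) := by
    intro ℓ
    have h := hs ℓ
    have he : (2 ^ m - 1 - s ℓ) + (s ℓ + 1) = 2 ^ m := by omega
    have := congrArg (Nat.cast : ℕ → ℝ) he
    push_cast at this
    linarith
  have hxpos : ∀ ℓ, 0 < x ℓ := by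
    intro ℓ
    exact lt_of_le_of_lt (by positivity) (hco ℓ).1
  -- part 1 : j ℓ ≤ 2^m - s ℓ
  have part1 : ∀ ℓ, j ℓ ≤ 2 ^ m - s ℓ := by
    intro ℓ
    have hne : (I ℓ).Nonempty := by
      rcases Set.eq_empty_or_nonempty (I ℓ) with he | hne
      · exfalso
        have hp := hxpos ℓ
        rw [hx] at hp
        simp only [he, measure_empty, ENNReal.toReal_zero] at hp
        exact lt_irrefl _ hp
      · exact hne
    have hbdB : BddBelow (I ℓ) := ⟨0, fun y hy => ((hint ℓ).1 hy).1⟩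
    have hbdA : BddAbove (I ℓ) := ⟨1, fun y hy => ((hint ℓ).1 hy).2⟩
    have hsub : I ℓ ⊆ Set.Icc (sInf (I ℓ)) (sSup (I ℓ)) :=
      fun y hy => ⟨csInf_le hbdB hy, le_csSup hbdA hy⟩
    have hSle : sInf (I ℓ) ≤ sSup (I ℓ) := csInf_le_csSup hne hbdB hbdA
    have hxle : x ℓ ≤ sSup (I ℓ) - sInf (I ℓ) := by
      have hmono := measure_mono (μ := (volume : MeasureTheory.Measure ℝ)) hsub
      rw [Real.volume_Icc] at hmono
      have := ENNReal.toReal_mono ENNReal.ofReal_ne_top hmono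
      rwa [ENNReal.toReal_ofReal (by linarith)] at this
    have hsup1 : sSup (I ℓ) ≤ 1 := csSup_le hne (fun y hy => ((hint ℓ).1 hy).2)
    have hinf : sInf (I ℓ) ≤ 1 - x ℓ := by linarith
    obtain ⟨hc1, hc2, hc3⟩ := hco ℓ
    have hp1 : (j ℓ : ℝ) / 2 ^ m - ((2:ℝ) ^ m)⁻¹ ≤ sInf (I ℓ) := hc3.1
    -- j/2^m ≤ 1 - x + 2^{-m} < 1 - s/2^m + 2^{-m}
    have hlt : (j ℓ : ℝ) / 2 ^ m < 1 - (s ℓ : ℝ) / 2 ^ m + ((2:ℝ) ^ m)⁻¹ := by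
      have : (j ℓ : ℝ) / 2 ^ m ≤ 1 - x ℓ + ((2:ℝ) ^ m)⁻¹ := by linarith
      linarith
    have hcast : ((2 ^ m - s ℓ : ℕ) : ℝ) = 2 ^ m - (s ℓ : ℝ) := by
      rw [Nat.cast_sub (hs ℓ).le]; push_cast; ring
    have : (j ℓ : ℝ) < ((2 ^ m - s ℓ : ℕ) : ℝ) + 1 := by
      rw [hcast]
      rw [div_lt_iff₀ hpm] at hlt
      have hexp : (1 - (s ℓ : ℝ) / 2 ^ m + ((2:ℝ) ^ m)⁻¹) * 2 ^ m = 2 ^ m - (s ℓ : ℝ) + 1 := by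
        field_simp
      rw [hexp] at hlt
      exact hlt
    have : j ℓ < 2 ^ m - s ℓ + 1 := by exact_mod_cast this
    omega
  refine ⟨part1, ?_⟩
  -- part 2 : sum bound
  have hprod : (volume (Set.pi Set.univ I)).toReal = ∏ ℓ, x ℓ := by
    rw [volume_pi_pi, ENNReal.toReal_prod]
  rw [hprod] at hvol
  have hstep : ∀ ℓ ∈ Finset.univ, x ℓ ≤ Real.exp (-(((2 ^ m - 1 - s ℓ : ℕ) : ℝ) / 2 ^ m)) := by
    intro ℓ _
    have hc2 := (hco ℓ).2.1
    have heq : ((s ℓ : ℝ) + 1) / 2 ^ m = -(((2 ^ m - 1 - s ℓ : ℕ) : ℝ) / 2 ^ m) + 1 := by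
      rw [hae ℓ]
      field_simp
      ring
    calc x ℓ ≤ ((s ℓ : ℝ) + 1) / 2 ^ m := hc2
      _ = -(((2 ^ m - 1 - s ℓ : ℕ) : ℝ) / 2 ^ m) + 1 := heq
      _ ≤ Real.exp (-(((2 ^ m - 1 - s ℓ : ℕ) : ℝ) / 2 ^ m)) := Real.add_one_le_exp _
  have hprodle : ∏ ℓ, x ℓ ≤ Real.exp (∑ ℓ, -(((2 ^ m - 1 - s ℓ : ℕ) : ℝ) / 2 ^ m)) := by
    rw [Real.exp_sum]
    exact Finset.prod_le_prod (fun ℓ _ => (hxpos ℓ).le) hstep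
  have hkey : ((2:ℝ) ^ m)⁻¹ < Real.exp (-((∑ ℓ, ((2 ^ m - 1 - s ℓ : ℕ) : ℝ)) / 2 ^ m)) := by
    have hsum : ∑ ℓ, -(((2 ^ m - 1 - s ℓ : ℕ) : ℝ) / 2 ^ m)
        = -((∑ ℓ, ((2 ^ m - 1 - s ℓ : ℕ) : ℝ)) / 2 ^ m) := by
      rw [Finset.sum_div, ← Finset.sum_neg_distrib]
    rw [← hsum]
    exact lt_of_lt_of_le hvol hprodle
  -- take logs
  have hlog : -((m : ℝ) * Real.log 2) < -((∑ ℓ, ((2 ^ m - 1 - s ℓ : ℕ) : ℝ)) / 2 ^ m) := by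
    have h1 : Real.log (((2:ℝ) ^ m)⁻¹) < -((∑ ℓ, ((2 ^ m - 1 - s ℓ : ℕ) : ℝ)) / 2 ^ m) := by
      calc Real.log (((2:ℝ) ^ m)⁻¹)
          < Real.log (Real.exp (-((∑ ℓ, ((2 ^ m - 1 - s ℓ : ℕ) : ℝ)) / 2 ^ m))) :=
            Real.log_lt_log (by positivity) hkey
        _ = _ := Real.log_exp _
    rwa [Real.log_inv, Real.log_pow] at h1
  have hlog2 : Real.log 2 < 1 := by
    have := Real.log_two_lt_d9
    linarith
  have hm1 : (1:ℝ) ≤ (m:ℝ) := by exact_mod_cast hm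
  have hsumlt : (∑ ℓ, ((2 ^ m - 1 - s ℓ : ℕ) : ℝ)) < (m : ℝ) * 2 ^ m := by
    have h2 : (∑ ℓ, ((2 ^ m - 1 - s ℓ : ℕ) : ℝ)) < (m : ℝ) * Real.log 2 * 2 ^ m := by
      have := hlog
      rw [neg_lt_neg_iff, div_lt_iff₀ hpm] at this
      linarith
    have h3 : (m : ℝ) * Real.log 2 * 2 ^ m < (m : ℝ) * 2 ^ m := by
      have hmp : (0:ℝ) < (m : ℝ) * 2 ^ m := by
        have : (0:ℝ) < (m:ℝ) := by linarith
        positivity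
      calc (m : ℝ) * Real.log 2 * 2 ^ m = ((m : ℝ) * 2 ^ m) * Real.log 2 := by ring
        _ < ((m : ℝ) * 2 ^ m) * 1 := mul_lt_mul_of_pos_left hlog2 hmp
        _ = (m : ℝ) * 2 ^ m := by ring
    linarith
  have hnat : (∑ ℓ, (2 ^ m - 1 - s ℓ)) < m * 2 ^ m := by
    have hc : ((∑ ℓ, (2 ^ m - 1 - s ℓ) : ℕ) : ℝ) < ((m * 2 ^ m : ℕ) : ℝ) := by
      push_cast
      convert hsumlt using 2
    exact_mod_cast hc
  omega

lemma final_bound {m d : ℕ} (hm : 1 ≤ m) (hd : 1 ≤ d) :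
    (((2 * d + (m * 2 ^ m - 1)).choose (m * 2 ^ m - 1) : ℕ) : ℝ)
      ≤ Real.exp (m * 2 ^ m * Real.log (2 ^ (m + 3) * d)) := by
  set B := m * 2 ^ m - 1 with hB
  have hA2 : 2 ≤ m * 2 ^ m := by
    calc 2 = 1 * 2 ^ 1 := by norm_num
      _ ≤ m * 2 ^ m := Nat.mul_le_mul hm (Nat.pow_le_pow_right (by norm_num) hm)
  have hB1 : 1 ≤ B := by omega
  set n := 2 * d + B with hn
  set X := (2:ℝ) ^ (m + 3) * d with hX
  have hd1 : (1:ℝ) ≤ d := by exact_mod_cast hd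
  have h16 : (16:ℝ) ≤ (2:ℝ) ^ (m + 3) := by
    calc (16:ℝ) = 2 ^ 4 := by norm_num
      _ ≤ 2 ^ (m + 3) := pow_le_pow_right₀ one_le_two (by omega)
  have hX16 : (16:ℝ) ≤ X := by
    calc (16:ℝ) = 16 * 1 := by ring
      _ ≤ (2:ℝ) ^ (m + 3) * d := mul_le_mul h16 hd1 (by norm_num) (by positivity)
  have hXpos : (0:ℝ) < X := by linarith
  have h1 : ((n.choose B : ℕ) : ℝ) ≤ (n:ℝ) ^ B / (B.factorial : ℝ) :=
    Nat.choose_le_pow_div B n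
  have hfacpos : (0:ℝ) < B.factorial := by exact_mod_cast B.factorial_pos
  have h2 : ((B:ℝ)) ^ B ≤ Real.exp B * B.factorial := pow_self_le_exp_mul_factorial B
  have hBR : (1:ℝ) ≤ (B:ℝ) := by exact_mod_cast hB1
  have hBBpos : (0:ℝ) < (B:ℝ) ^ B := by positivity
  have h3 : ((n.choose B : ℕ) : ℝ) * (B:ℝ) ^ B ≤ (n:ℝ) ^ B * Real.exp B := by
    calc ((n.choose B : ℕ) : ℝ) * (B:ℝ) ^ B
        ≤ ((n:ℝ) ^ B / B.factorial) * (Real.exp B * B.factorial) :=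
          mul_le_mul h1 h2 (by positivity) (by positivity)
      _ = (n:ℝ) ^ B * Real.exp B := by field_simp
  have hexpB : Real.exp (B:ℝ) = Real.exp 1 ^ B := by
    rw [← Real.exp_nat_mul]; norm_num
  have hne : (n:ℝ) * Real.exp 1 ≤ X * B := by
    have hcast : (n:ℝ) = 2 * (d:ℝ) + B := by rw [hn]; push_cast; ring
    have hE : Real.exp 1 < 2.7182818286 := Real.exp_one_lt_d9
    have hEpos := Real.exp_pos 1
    have h2dB : (2 * (d:ℝ) + B) ≤ 3 * (d:ℝ) * B := by nlinarith
    have hXB : 16 * ((d:ℝ) * B) ≤ X * B := by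
      rw [hX]; nlinarith
    calc (n:ℝ) * Real.exp 1 ≤ (3 * (d:ℝ) * B) * Real.exp 1 := by
          rw [hcast]; nlinarith
      _ ≤ (3 * (d:ℝ) * B) * 3 := by nlinarith
      _ ≤ 16 * ((d:ℝ) * B) := by nlinarith
      _ ≤ X * B := hXB
  have h4 : ((n.choose B : ℕ) : ℝ) * (B:ℝ) ^ B ≤ X ^ B * (B:ℝ) ^ B := by
    calc ((n.choose B : ℕ) : ℝ) * (B:ℝ) ^ B ≤ (n:ℝ) ^ B * Real.exp B := h3
      _ = ((n:ℝ) * Real.exp 1) ^ B := by rw [hexpB, mul_pow]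
      _ ≤ (X * B) ^ B := pow_le_pow_left₀ (by positivity) hne B
      _ = X ^ B * (B:ℝ) ^ B := mul_pow _ _ _
  have h5 : ((n.choose B : ℕ) : ℝ) ≤ X ^ B := le_of_mul_le_mul_right h4 hBBpos
  have h6 : X ^ B ≤ X ^ (m * 2 ^ m) := pow_le_pow_right₀ (by linarith) (by omega)
  have h7 : Real.exp ((m:ℝ) * 2 ^ m * Real.log X) = X ^ (m * 2 ^ m) := by
    rw [show ((m:ℝ) * 2 ^ m) = ((m * 2 ^ m : ℕ) : ℝ) by push_cast; ring,
      Real.exp_nat_mul, Real.exp_log hXpos]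
  rw [h7]
  exact h5.trans h6


/-- The index set `𝕀_m = {(s,p) : Ω_m(s,p) ≠ ∅}` (with `p` encoded by the integer vector
`j`, `p ℓ = j ℓ / 2^m`) satisfies `#𝕀_m ≤ exp(m · 2^m · log(2^{m+3} d))`. -/
theorem statement_4 (m d : ℕ) (hm : 1 ≤ m) (hd : 1 ≤ d) :
    ((Set.ncard { sj : (Fin d → ℕ) × (Fin d → ℕ) |
        (∀ ℓ, sj.1 ℓ < 2 ^ m) ∧ (∀ ℓ, 1 ≤ sj.2 ℓ ∧ sj.2 ℓ ≤ 2 ^ m - 1) ∧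
        ∃ I, memOmega m sj.1 (fun ℓ => (sj.2 ℓ : ℝ) / 2 ^ m) I } : ℕ) : ℝ)
      ≤ Real.exp (m * 2 ^ m * Real.log (2 ^ (m + 3) * d)) := by
  have hcard : Set.ncard { sj : (Fin d → ℕ) × (Fin d → ℕ) |
        (∀ ℓ, sj.1 ℓ < 2 ^ m) ∧ (∀ ℓ, 1 ≤ sj.2 ℓ ∧ sj.2 ℓ ≤ 2 ^ m - 1) ∧
        ∃ I, memOmega m sj.1 (fun ℓ => (sj.2 ℓ : ℝ) / 2 ^ m) I }
      ≤ (2 * d + (m * 2 ^ m - 1)).choose (m * 2 ^ m - 1) := by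
    apply card_bound
    intro sj hsj
    obtain ⟨h1, h2, h3⟩ := hsj
    have hder := derive hm sj.1 sj.2 h1 (fun ℓ => (h2 ℓ).1) h3
    exact ⟨fun ℓ => ⟨h1 ℓ, (h2 ℓ).1, hder.1 ℓ⟩, hder.2⟩
  exact le_trans (Nat.cast_le.mpr hcard) (final_bound hm hd)
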